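/- Let t ≥ 1 and let λ_1, …, λ_t be real numbers with mean λ̄ = (1/t) Σ_{j=1}^{t} λ_j. Then Σ_{i=1}^{t} |λ̄ − λ_i| ≤ 2 Σ_{l=1}^{t−1} l · |λ_l − λ_{l+1}|. -/

import Mathlib

open scoped BigOperators

private lemma telescope_abs (lam : ℕ → ℝ) (a b : ℕ) (hab : a ≤ b) :
    |lam b - lam a| ≤ ∑ l ∈ Finset.Ico a b, |lam l - lam (l + 1)| := by
  induction b, hab using Nat.le_induction with
  | base => simp
  | succ b hb ih =>
    rw [Finset.sum_Ico_succ_top hb]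
    calc |lam (b + 1) - lam a|
        = |(lam b - lam a) + (lam (b + 1) - lam b)| := by congr 1; ring
      _ ≤ |lam b - lam a| + |lam (b + 1) - lam b| := abs_add_le _ _
      _ = |lam b - lam a| + |lam b - lam (b + 1)| := by rw [abs_sub_comm (lam (b + 1))]
      _ ≤ _ := add_le_add_left ih _

/-- indicator weight -/
private def chi (i j l : ℕ) : ℝ :=
  (if i ≤ l ∧ l < j then (1 : ℝ) else 0) + (if j ≤ l ∧ l < i then (1 : ℝ) else 0)

private lemma chi_nonneg (i j l : ℕ) : 0 ≤ chi i j l := by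
  unfold chi; split_ifs <;> norm_num

private lemma chi_comm (i j l : ℕ) : chi j i l = chi i j l := by
  unfold chi; rw [add_comm]

/-- counting bound for one of the two indicator pieces -/
private lemma count_piece (t l : ℕ) (ht : 1 ≤ t) (hl : l ≤ t - 1) :
    ∑ a ∈ Finset.Icc 1 t, ∑ b ∈ Finset.Icc 1 t,
      (if a ≤ l ∧ l < b then (1 : ℝ) else 0) ≤ (l : ℝ) * t := by
  have hlt : l ≤ t := le_trans hl (Nat.sub_le t 1)
  have inner : ∀ a, ∑ b ∈ Finset.Icc 1 t, (if a ≤ l ∧ l < b then (1 : ℝ) else 0)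
      ≤ (if a ≤ l then (t : ℝ) else 0) := by
    intro a
    by_cases h : a ≤ l
    · simp only [h, true_and, if_true]
      calc ∑ b ∈ Finset.Icc 1 t, (if l < b then (1 : ℝ) else 0)
          ≤ ∑ b ∈ Finset.Icc 1 t, (1 : ℝ) := by
            apply Finset.sum_le_sum; intro b _; split_ifs <;> norm_num
        _ = t := by rw [Finset.sum_const, Nat.card_Icc]; simp
    · simp [h]
  calc ∑ a ∈ Finset.Icc 1 t, ∑ b ∈ Finset.Icc 1 t,
        (if a ≤ l ∧ l < b then (1 : ℝ) else 0)
      ≤ ∑ a ∈ Finset.Icc 1 t, (if a ≤ l then (t : ℝ) else 0) :=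
        Finset.sum_le_sum fun a _ => inner a
    _ = ∑ a ∈ Finset.Icc 1 l, (if a ≤ l then (t : ℝ) else 0) := by
        refine (Finset.sum_subset ?_ ?_).symm
        · intro x hx
          simp only [Finset.mem_Icc] at hx ⊢
          exact ⟨hx.1, le_trans hx.2 hlt⟩
        · intro x hx hx'
          simp only [Finset.mem_Icc] at hx hx'
          have : ¬ x ≤ l := fun h => hx' ⟨hx.1, h⟩
          simp [this]
    _ = ∑ a ∈ Finset.Icc 1 l, (t : ℝ) := Finset.sum_congr rfl (fun a ha => by
          simp only [Finset.mem_Icc] at ha; simp [ha.2])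
    _ = (l : ℝ) * t := by
        rw [Finset.sum_const, Nat.card_Icc]
        simp [mul_comm]

theorem mean_deviation_le_weighted_consecutive_variation
    (t : ℕ) (ht : 1 ≤ t) (lam : ℕ → ℝ) :
    ∑ i ∈ Finset.Icc 1 t,
        |(1 / (t : ℝ)) * (∑ j ∈ Finset.Icc 1 t, lam j) - lam i|
      ≤ 2 * ∑ l ∈ Finset.Icc 1 (t - 1), (l : ℝ) * |lam l - lam (l + 1)| := by
  have ht0 : (0 : ℝ) < t := by exact_mod_cast Nat.lt_of_lt_of_le Nat.zero_lt_one ht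
  have hcard : (Finset.Icc 1 t).card = t := by rw [Nat.card_Icc]; omega
  have hdnn : ∀ l : ℕ, (0 : ℝ) ≤ |lam l - lam (l + 1)| := fun l => abs_nonneg _
  -- Step B: pairwise deviation bounded by weighted consecutive differences
  have stepB : ∀ i ∈ Finset.Icc 1 t, ∀ j ∈ Finset.Icc 1 t,
      |lam j - lam i| ≤ ∑ l ∈ Finset.Icc 1 (t - 1), chi i j l * |lam l - lam (l + 1)| := by
    intro i hi j hj
    simp only [Finset.mem_Icc] at hi hj
    have key : ∀ a b : ℕ, 1 ≤ a → b ≤ t → a ≤ b →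
        |lam b - lam a| ≤ ∑ l ∈ Finset.Icc 1 (t - 1), chi a b l * |lam l - lam (l + 1)| := by
      intro a b ha hb hab
      refine le_trans (telescope_abs lam a b hab) ?_
      have hsub : Finset.Ico a b ⊆ Finset.Icc 1 (t - 1) := by
        intro l hl
        simp only [Finset.mem_Ico, Finset.mem_Icc] at hl ⊢
        constructor
        · exact le_trans ha hl.1
        · omega
      have heq : ∀ l ∈ Finset.Ico a b,
          |lam l - lam (l + 1)| = chi a b l * |lam l - lam (l + 1)| := by
        intro l hl
        simp only [Finset.mem_Ico] at hl
        have h1 : a ≤ l ∧ l < b := hl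
        have h2 : ¬ (b ≤ l ∧ l < a) := by omega
        simp [chi, h1, h2]
      rw [Finset.sum_congr rfl heq]
      exact Finset.sum_le_sum_of_subset_of_nonneg hsub
        (fun l _ _ => mul_nonneg (chi_nonneg _ _ _) (hdnn _))
    rcases le_total i j with h | h
    · exact key i j hi.1 hj.2 h
    · rw [abs_sub_comm]
      refine le_trans (key j i hj.1 hi.2 h) (le_of_eq ?_)
      exact Finset.sum_congr rfl fun l _ => by rw [chi_comm]
  -- counting bound
  have hcount : ∀ l ∈ Finset.Icc 1 (t - 1),
      ∑ i ∈ Finset.Icc 1 t, ∑ j ∈ Finset.Icc 1 t, chi i j l ≤ 2 * l * t := by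
    intro l hl
    simp only [Finset.mem_Icc] at hl
    have h1 := count_piece t l ht hl.2
    have h2 : ∑ i ∈ Finset.Icc 1 t, ∑ j ∈ Finset.Icc 1 t,
        (if j ≤ l ∧ l < i then (1 : ℝ) else 0) ≤ (l : ℝ) * t := by
      rw [Finset.sum_comm]
      exact count_piece t l ht hl.2
    calc ∑ i ∈ Finset.Icc 1 t, ∑ j ∈ Finset.Icc 1 t, chi i j l
        = (∑ i ∈ Finset.Icc 1 t, ∑ j ∈ Finset.Icc 1 t,
            (if i ≤ l ∧ l < j then (1 : ℝ) else 0))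
          + ∑ i ∈ Finset.Icc 1 t, ∑ j ∈ Finset.Icc 1 t,
            (if j ≤ l ∧ l < i then (1 : ℝ) else 0) := by
          simp only [chi, Finset.sum_add_distrib]
      _ ≤ (l : ℝ) * t + (l : ℝ) * t := add_le_add h1 h2
      _ = 2 * l * t := by ring
  -- assemble
  calc ∑ i ∈ Finset.Icc 1 t, |(1 / (t : ℝ)) * (∑ j ∈ Finset.Icc 1 t, lam j) - lam i|
      = ∑ i ∈ Finset.Icc 1 t,
          (1 / (t : ℝ)) * |∑ j ∈ Finset.Icc 1 t, (lam j - lam i)| := by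
        refine Finset.sum_congr rfl fun i _ => ?_
        have : (1 / (t : ℝ)) * (∑ j ∈ Finset.Icc 1 t, lam j) - lam i
            = (1 / (t : ℝ)) * (∑ j ∈ Finset.Icc 1 t, (lam j - lam i)) := by
          rw [Finset.sum_sub_distrib, Finset.sum_const, hcard, nsmul_eq_mul]
          field_simp
        rw [this, abs_mul, abs_of_pos (show (0 : ℝ) < 1 / t by positivity)]
    _ ≤ ∑ i ∈ Finset.Icc 1 t,
          (1 / (t : ℝ)) * ∑ j ∈ Finset.Icc 1 t, |lam j - lam i| := by
        refine Finset.sum_le_sum fun i _ => ?_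
        exact mul_le_mul_of_nonneg_left (Finset.abs_sum_le_sum_abs _ _) (by positivity)
    _ = (1 / (t : ℝ)) * ∑ i ∈ Finset.Icc 1 t, ∑ j ∈ Finset.Icc 1 t, |lam j - lam i| := by
        rw [Finset.mul_sum]
    _ ≤ (1 / (t : ℝ)) * ∑ i ∈ Finset.Icc 1 t, ∑ j ∈ Finset.Icc 1 t,
          ∑ l ∈ Finset.Icc 1 (t - 1), chi i j l * |lam l - lam (l + 1)| := by
        refine mul_le_mul_of_nonneg_left ?_ (by positivity)
        exact Finset.sum_le_sum fun i hi => Finset.sum_le_sum fun j hj => stepB i hi j hj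
    _ = (1 / (t : ℝ)) * ∑ l ∈ Finset.Icc 1 (t - 1),
          (∑ i ∈ Finset.Icc 1 t, ∑ j ∈ Finset.Icc 1 t, chi i j l)
            * |lam l - lam (l + 1)| := by
        congr 1
        rw [Finset.sum_congr rfl fun i (_ : i ∈ Finset.Icc 1 t) =>
          Finset.sum_comm (s := Finset.Icc 1 t) (t := Finset.Icc 1 (t - 1))
            (f := fun j l => chi i j l * |lam l - lam (l + 1)|)]
        rw [Finset.sum_comm]
        refine Finset.sum_congr rfl fun l _ => ?_
        rw [Finset.sum_mul]
        exact Finset.sum_congr rfl fun i _ => (Finset.sum_mul _ _ _).symm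
    _ ≤ (1 / (t : ℝ)) * ∑ l ∈ Finset.Icc 1 (t - 1),
          (2 * l * t) * |lam l - lam (l + 1)| := by
        refine mul_le_mul_of_nonneg_left ?_ (by positivity)
        exact Finset.sum_le_sum fun l hl =>
          mul_le_mul_of_nonneg_right (hcount l hl) (hdnn l)
    _ = 2 * ∑ l ∈ Finset.Icc 1 (t - 1), (l : ℝ) * |lam l - lam (l + 1)| := by
        rw [Finset.mul_sum, Finset.mul_sum]
        refine Finset.sum_congr rfl fun l _ => ?_
        field_simp
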